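/- arXiv:2201.05349 — 3 statements merged into one kernel-verified Lean document; each statement's English description precedes it below -/
import Mathlib

section
/- The TFGM objective equals the relaxed QAP objective with a specific choice of Q and P: for a linear GNN H^{(l)} = A H^{(l-1)} W_l with H^{(0)} = X, and Z^{(l)}_{ij} = 1/(‖(H^{(l)})^{(s)}_i‖₂ ‖(H^{(l)})^{(t)}_j‖₂) (assuming all these norms are nonzero), we have for every assignment matrix S: ∑_{ij} S_{ij} ∑_{l=0}^{L} Cos((H^{(l)})^{(s)}, (H^{(l)})^{(t)})_{ij} = ∑_{ij} Q_{ij} S_{ij} + ∑_{ij} S_{ij} ∑_{i',j'} A^{(s)}_{ii'} A^{(t)}_{jj'} P^{(ij)}_{i'j'}, where Q = Z^{(0)} ⊙ (X^{(s)} (X^{(t)})^T) and P^{(ij)} = ∑_{l=1}^{L} Z^{(l)}_{ij} (H^{(l-1)})^{(s)} W_l W_l^T ((H^{(l-1)})^{(t)})^T. -/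
open Matrix Finset

/-- Layer outputs of a linear GNN: `H 0 = X`, `H l = A * H (l-1) * W l`. -/
def layerH {n d : ℕ} (A : Matrix (Fin n) (Fin n) ℝ) (W : ℕ → Matrix (Fin d) (Fin d) ℝ)
    (X : Matrix (Fin n) (Fin d) ℝ) : ℕ → Matrix (Fin n) (Fin d) ℝ
  | 0 => X
  | (l + 1) => A * layerH A W X l * W (l + 1)

/-- Euclidean norm of the `i`-th row of a matrix. -/
noncomputable def rowNorm {n d : ℕ} (M : Matrix (Fin n) (Fin d) ℝ) (i : Fin n) : ℝ :=
  Real.sqrt (∑ k, M i k ^ 2)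

/-- Row-wise cosine similarity matrix. -/
noncomputable def cosSim {n m d : ℕ} (U : Matrix (Fin n) (Fin d) ℝ)
    (V : Matrix (Fin m) (Fin d) ℝ) : Matrix (Fin n) (Fin m) ℝ :=
  fun i j => (∑ k, U i k * V j k) / (rowNorm U i * rowNorm V j)

theorem stmt2 {n m d : ℕ} (L : ℕ)
    (As : Matrix (Fin n) (Fin n) ℝ) (Xs : Matrix (Fin n) (Fin d) ℝ)
    (At : Matrix (Fin m) (Fin m) ℝ) (Xt : Matrix (Fin m) (Fin d) ℝ)
    (W : ℕ → Matrix (Fin d) (Fin d) ℝ)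
    (Hs : ℕ → Matrix (Fin n) (Fin d) ℝ) (Ht : ℕ → Matrix (Fin m) (Fin d) ℝ)
    (hHs : Hs = layerH As W Xs) (hHt : Ht = layerH At W Xt)
    (hs : ∀ l ≤ L, ∀ i, rowNorm (Hs l) i ≠ 0)
    (ht : ∀ l ≤ L, ∀ j, rowNorm (Ht l) j ≠ 0)
    (Z : ℕ → Matrix (Fin n) (Fin m) ℝ)
    (hZ : ∀ l i j, Z l i j = 1 / (rowNorm (Hs l) i * rowNorm (Ht l) j))
    (Q : Matrix (Fin n) (Fin m) ℝ)
    (hQ : Q = fun i j => Z 0 i j * (Xs * Xtᵀ) i j)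
    (P : Fin n → Fin m → Matrix (Fin n) (Fin m) ℝ)
    (hP : ∀ i j, P i j = ∑ l ∈ Finset.Icc 1 L, Z l i j • (Hs (l - 1) * W l * (W l)ᵀ * (Ht (l - 1))ᵀ))
    (S : Matrix (Fin n) (Fin m) ℝ) :
    ∑ i, ∑ j, S i j * ∑ l ∈ Finset.range (L + 1), cosSim (Hs l) (Ht l) i j =
      (∑ i, ∑ j, Q i j * S i j) +
        ∑ i, ∑ j, S i j * ∑ i', ∑ j', As i i' * At j j' * P i j i' j' := by
  -- general matrix identity
  have matkey : ∀ (U : Matrix (Fin n) (Fin n) ℝ) (M : Matrix (Fin n) (Fin m) ℝ)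
      (V : Matrix (Fin m) (Fin m) ℝ) (i : Fin n) (j : Fin m),
      (U * M * Vᵀ) i j = ∑ i', ∑ j', U i i' * V j j' * M i' j' := by
    intro U M V i j
    simp only [Matrix.mul_apply, Matrix.transpose_apply]
    rw [Finset.sum_comm]
    refine Finset.sum_congr rfl fun j' _ => ?_
    rw [Finset.sum_mul]
    exact Finset.sum_congr rfl fun i' _ => by ring
  have cosZ : ∀ l i j, cosSim (Hs l) (Ht l) i j = Z l i j * (Hs l * (Ht l)ᵀ) i j := by
    intro l i j
    rw [hZ]
    have hm : (Hs l * (Ht l)ᵀ) i j = ∑ k, Hs l i k * Ht l j k := by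
      simp [Matrix.mul_apply]
    rw [hm]
    simp only [cosSim]
    rw [div_eq_mul_inv, one_div]
    ring
  have prodstep : ∀ l, Hs (l + 1) * (Ht (l + 1))ᵀ =
      As * (Hs l * W (l + 1) * (W (l + 1))ᵀ * (Ht l)ᵀ) * Atᵀ := by
    intro l
    have h1 : Hs (l + 1) = As * Hs l * W (l + 1) := by rw [hHs]; rfl
    have h2 : Ht (l + 1) = At * Ht l * W (l + 1) := by rw [hHt]; rfl
    rw [h1, h2]
    simp [Matrix.transpose_mul, Matrix.mul_assoc]
  have key : ∀ i j, ∑ l ∈ Finset.range (L + 1), cosSim (Hs l) (Ht l) i j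
      = Q i j + ∑ i', ∑ j', As i i' * At j j' * P i j i' j' := by
    intro i j
    rw [Finset.sum_range_succ']
    have h0 : cosSim (Hs 0) (Ht 0) i j = Q i j := by
      rw [hQ, cosZ]
      have : Hs 0 * (Ht 0)ᵀ = Xs * Xtᵀ := by rw [hHs, hHt]; rfl
      rw [this]
    rw [h0, add_comm]
    congr 1
    -- RHS P part
    have hPsum : ∑ l ∈ Finset.Icc 1 L, Z l i j *
            (As * (Hs (l - 1) * W l * (W l)ᵀ * (Ht (l - 1))ᵀ) * Atᵀ) i j
        = ∑ i', ∑ j', As i i' * At j j' * P i j i' j' := by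
      have step1 : ∀ l ∈ Finset.Icc 1 L,
          Z l i j * (As * (Hs (l - 1) * W l * (W l)ᵀ * (Ht (l - 1))ᵀ) * Atᵀ) i j
          = ∑ i', ∑ j', As i i' * At j j' *
              (Z l i j * (Hs (l - 1) * W l * (W l)ᵀ * (Ht (l - 1))ᵀ) i' j') := by
        intro l _
        rw [matkey, Finset.mul_sum]
        refine Finset.sum_congr rfl fun i' _ => ?_
        rw [Finset.mul_sum]
        exact Finset.sum_congr rfl fun j' _ => by ring
      rw [Finset.sum_congr rfl step1]
      rw [Finset.sum_comm]
      refine Finset.sum_congr rfl fun i' _ => ?_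
      rw [Finset.sum_comm]
      refine Finset.sum_congr rfl fun j' _ => ?_
      rw [hP, Matrix.sum_apply, Finset.mul_sum]
      exact Finset.sum_congr rfl fun l _ => by simp only [Matrix.smul_apply, smul_eq_mul]; try ring
    rw [← hPsum]
    rw [show Finset.Icc 1 L = Finset.map ⟨fun l => l + 1, add_left_injective 1⟩
        (Finset.range L) by
      ext x
      simp only [Finset.mem_Icc, Finset.mem_map, Finset.mem_range, Function.Embedding.coeFn_mk]
      constructor
      · rintro ⟨h1, h2⟩; exact ⟨x - 1, by omega, by omega⟩
      · rintro ⟨a, ha, rfl⟩; omega]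
    rw [Finset.sum_map]
    refine Finset.sum_congr rfl fun l _ => ?_
    simp only [Function.Embedding.coeFn_mk, Nat.add_sub_cancel]
    rw [cosZ, prodstep]
  simp only [key, mul_add, Finset.sum_add_distrib]
  congr 1
  exact Finset.sum_congr rfl fun i _ => Finset.sum_congr rfl fun j _ => mul_comm _ _
end

section
/- Permutation invariance of the weight-free GNN similarity: if P and R are permutation matrices and the target graph is an isomorphic copy of the source, i.e., A^{(t)} = P A^{(s)} P^T and X^{(t)} = P X^{(s)}, then the weight-free BasicTFGM similarity matrix M = (A^{(s)})^L X^{(s)} ((A^{(t)})^L X^{(t)})^T satisfies M = (A^{(s)})^L X^{(s)} (X^{(s)})^T ((A^{(s)})^L)^T P^T; in particular, the assignment S = P^T achieves objective value ∑_i ‖((A^{(s)})^L X^{(s)})_i‖₂². -/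
open Matrix Finset

theorem stmt10 {n d : ℕ} (L : ℕ)
    (As : Matrix (Fin n) (Fin n) ℝ) (Xs : Matrix (Fin n) (Fin d) ℝ)
    (At : Matrix (Fin n) (Fin n) ℝ) (Xt : Matrix (Fin n) (Fin d) ℝ)
    (σ : Equiv.Perm (Fin n)) (P : Matrix (Fin n) (Fin n) ℝ)
    (hP : ∀ i j, P i j = if σ i = j then 1 else 0)
    (hAt : At = P * As * Pᵀ) (hXt : Xt = P * Xs)
    (M : Matrix (Fin n) (Fin n) ℝ)
    (hM : M = (As ^ L * Xs) * (At ^ L * Xt)ᵀ) :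
    M = As ^ L * Xs * Xsᵀ * (As ^ L)ᵀ * Pᵀ ∧
      ∑ i, ∑ j, Pᵀ i j * M i j = ∑ i, ∑ k, ((As ^ L * Xs) i k) ^ 2 := by
  have hPtP : Pᵀ * P = 1 := by
    ext i j
    simp only [Matrix.mul_apply, Matrix.transpose_apply, hP, Matrix.one_apply]
    rw [Finset.sum_eq_single (σ.symm i)]
    · simp [Equiv.eq_symm_apply, eq_comm]
    · intro k _ hk
      have : σ k ≠ i := fun h => hk (by simp [← h])
      simp [this]
    · simp
  have hpow : At ^ L = P * As ^ L * Pᵀ := by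
    clear hM
    induction L with
    | zero =>
      have : P * Pᵀ = 1 := by
        ext i j
        simp only [Matrix.mul_apply, Matrix.transpose_apply, hP, Matrix.one_apply]
        rw [Finset.sum_eq_single (σ i)] <;> simp +contextual [eq_comm]
      simp [this]
    | succ m ih =>
      rw [pow_succ, pow_succ, ih, hAt]
      calc P * As ^ m * Pᵀ * (P * As * Pᵀ)
          = P * As ^ m * (Pᵀ * P) * As * Pᵀ := by noncomm_ring
        _ = P * (As ^ m * As) * Pᵀ := by rw [hPtP]; noncomm_ring
  have hM' : M = As ^ L * Xs * Xsᵀ * (As ^ L)ᵀ * Pᵀ := by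
    rw [hM, hpow, hXt]
    rw [Matrix.transpose_mul, Matrix.transpose_mul, Matrix.transpose_mul,
      Matrix.transpose_mul, Matrix.transpose_transpose]
    calc As ^ L * Xs * (Xsᵀ * Pᵀ * (Pᵀᵀ * ((As ^ L)ᵀ * Pᵀ)))
        = As ^ L * Xs * Xsᵀ * (Pᵀ * Pᵀᵀ) * (As ^ L)ᵀ * Pᵀ := by
          simp only [Matrix.mul_assoc]
      _ = As ^ L * Xs * Xsᵀ * (As ^ L)ᵀ * Pᵀ := by
          rw [show Pᵀ * Pᵀᵀ = 1 by rw [Matrix.transpose_transpose, hPtP]]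
          simp [Matrix.mul_assoc]
  refine ⟨hM', ?_⟩
  have hMP : M * P = As ^ L * Xs * (As ^ L * Xs)ᵀ := by
    rw [hM', Matrix.transpose_mul]
    calc As ^ L * Xs * Xsᵀ * (As ^ L)ᵀ * Pᵀ * P
        = As ^ L * Xs * Xsᵀ * (As ^ L)ᵀ * (Pᵀ * P) := by rw [Matrix.mul_assoc]
      _ = As ^ L * Xs * (Xsᵀ * (As ^ L)ᵀ) := by rw [hPtP]; simp [Matrix.mul_assoc]
  have htr : ∑ i, ∑ j, Pᵀ i j * M i j = (M * P).trace := by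
    rw [Matrix.trace]
    simp only [Matrix.diag, Matrix.mul_apply, Matrix.transpose_apply]
    exact Finset.sum_congr rfl fun i _ => Finset.sum_congr rfl fun j _ => mul_comm _ _
  rw [htr, hMP, Matrix.trace]
  simp only [Matrix.diag, Matrix.mul_apply, Matrix.transpose_apply, sq]
end

section
/- If two graphs are isomorphic via permutation P (A^{(t)} = P A^{(s)} P^T, X^{(t)} = P X^{(s)}), then the assignment S = P^T maximizes the BasicTFGM objective with the weight-free GNN φ(A,X) = A^L X over all permutation-matrix assignments, i.e., for every permutation matrix S, ∑_{ij} S_{ij} (φ(G^{(s)}) φ(G^{(t)})^T)_{ij} ≤ ∑_{ij} (P^T)_{ij} (φ(G^{(s)}) φ(G^{(t)})^T)_{ij}. -/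
open Matrix Finset

theorem stmt11 {n d : ℕ} (L : ℕ)
    (As : Matrix (Fin n) (Fin n) ℝ) (Xs : Matrix (Fin n) (Fin d) ℝ)
    (At : Matrix (Fin n) (Fin n) ℝ) (Xt : Matrix (Fin n) (Fin d) ℝ)
    (σ : Equiv.Perm (Fin n)) (P : Matrix (Fin n) (Fin n) ℝ)
    (hP : ∀ i j, P i j = if σ i = j then 1 else 0)
    (hAt : At = P * As * Pᵀ) (hXt : Xt = P * Xs) :
    ∀ (τ : Equiv.Perm (Fin n)) (S : Matrix (Fin n) (Fin n) ℝ),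
      (∀ i j, S i j = if τ i = j then 1 else 0) →
      ∑ i, ∑ j, S i j * ((As ^ L * Xs) * (At ^ L * Xt)ᵀ) i j ≤
        ∑ i, ∑ j, Pᵀ i j * ((As ^ L * Xs) * (At ^ L * Xt)ᵀ) i j := by
  intro τ S hS
  -- P is orthogonal
  have hPtP : Pᵀ * P = 1 := by
    ext i j
    simp only [Matrix.mul_apply, Matrix.transpose_apply, hP, Matrix.one_apply]
    rw [← Equiv.sum_comp σ.symm
      (fun k => (if σ k = i then (1:ℝ) else 0) * (if σ k = j then 1 else 0))]
    simp [Equiv.apply_eq_iff_eq_symm_apply, eq_comm, Finset.sum_ite_eq]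
  have hPPt : P * Pᵀ = 1 := by
    ext i j
    simp only [Matrix.mul_apply, Matrix.transpose_apply, hP, Matrix.one_apply]
    simp [ite_and, Finset.sum_ite_eq, σ.injective.eq_iff, eq_comm]
  have hAtL : ∀ m, At ^ m = P * As ^ m * Pᵀ := by
    intro m
    induction m with
    | zero => simp [hPPt]
    | succ m ih =>
      rw [pow_succ, pow_succ, ih, hAt]
      simp only [Matrix.mul_assoc]
      rw [← Matrix.mul_assoc Pᵀ P (As * Pᵀ), hPtP, Matrix.one_mul]
  set B := As ^ L * Xs with hB
  have hCt : At ^ L * Xt = P * B := by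
    rw [hAtL, hXt, hB]
    simp only [Matrix.mul_assoc]
    rw [← Matrix.mul_assoc Pᵀ P Xs, hPtP, Matrix.one_mul]
  have hPB : ∀ j k, (P * B) j k = B (σ j) k := by
    intro j k
    simp only [Matrix.mul_apply, hP, ite_mul, one_mul, zero_mul,
      Finset.sum_ite_eq, Finset.mem_univ, if_true]
  have hM : ∀ i j, ((As ^ L * Xs) * (At ^ L * Xt)ᵀ) i j = ∑ k, B i k * B (σ j) k := by
    intro i j
    rw [hCt, ← hB, Matrix.mul_apply]
    exact Finset.sum_congr rfl fun k _ => by rw [Matrix.transpose_apply, hPB]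
  have hLHS : ∑ i, ∑ j, S i j * ((As ^ L * Xs) * (At ^ L * Xt)ᵀ) i j
      = ∑ i, ∑ k, B i k * B (σ (τ i)) k := by
    refine Finset.sum_congr rfl fun i _ => ?_
    simp only [hS, ite_mul, one_mul, zero_mul, Finset.sum_ite_eq,
      Finset.mem_univ, if_true, hM]
  have hPt : ∀ i j, Pᵀ i j = if j = σ.symm i then (1:ℝ) else 0 := by
    intro i j
    rw [Matrix.transpose_apply, hP]
    by_cases h : j = σ.symm i
    · subst h; simp
    · rw [if_neg, if_neg h]
      intro hc
      exact h (by rw [← hc]; simp)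
  have hRHS : ∑ i, ∑ j, Pᵀ i j * ((As ^ L * Xs) * (At ^ L * Xt)ᵀ) i j
      = ∑ i, ∑ k, B i k * B i k := by
    refine Finset.sum_congr rfl fun i _ => ?_
    simp only [hPt, ite_mul, one_mul, zero_mul, Finset.sum_ite_eq',
      Finset.mem_univ, if_true, hM]
    refine Finset.sum_congr rfl fun k _ => ?_
    rw [Equiv.apply_symm_apply]
  rw [hLHS, hRHS]
  -- rearrangement inequality
  set ρ : Equiv.Perm (Fin n) := τ.trans σ with hρ
  have hρ' : ∀ i, σ (τ i) = ρ i := fun i => rfl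
  simp only [hρ']
  have h2 : ∑ i, ∑ k, 2 * (B i k * B (ρ i) k) ≤ ∑ i, ∑ k, (B i k ^ 2 + B (ρ i) k ^ 2) := by
    refine Finset.sum_le_sum fun i _ => Finset.sum_le_sum fun k _ => ?_
    rw [← mul_assoc]
    exact two_mul_le_add_sq _ _
  have h3 : ∑ i, ∑ k, B (ρ i) k ^ 2 = ∑ i, ∑ k, B i k ^ 2 :=
    Equiv.sum_comp ρ (fun i => ∑ k, B i k ^ 2)
  have e1 : ∑ i, ∑ k, 2 * (B i k * B (ρ i) k) = 2 * ∑ i, ∑ k, B i k * B (ρ i) k := by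
    simp_rw [← Finset.mul_sum]
  have e2 : ∑ i, ∑ k, (B i k ^ 2 + B (ρ i) k ^ 2)
      = (∑ i, ∑ k, B i k ^ 2) + ∑ i, ∑ k, B (ρ i) k ^ 2 := by
    rw [← Finset.sum_add_distrib]
    exact Finset.sum_congr rfl fun i _ => Finset.sum_add_distrib
  have e3 : ∑ i, ∑ k, B i k * B i k = ∑ i, ∑ k, B i k ^ 2 := by
    simp [sq]
  linarith
end
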